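/- arXiv:1309.2779 — 2 statements merged into one kernel-verified Lean document; each statement's English description precedes it below -/
import Mathlib

section
/- If (W_1, W_2) ∼ Dirichlet(n_1 + m_1, n_2 + m_2) is independent of independent random variables X_1 ∼ Beta(n_1, m_1) and X_2 ∼ Beta(n_2, m_2), then W_1 X_1 + W_2 X_2 ∼ Beta(n_1 + n_2, m_1 + m_2). In particular, for W_1 ∼ Beta(n_1+m_1, n_2+m_2) independent of X_1, X_2, the random variable W_1 X_1 + (1 − W_1) X_2 has the Beta(n_1+n_2, m_1+m_2) distribution. -/
open MeasureTheory ProbabilityTheory Real Set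

noncomputable def betaMeasure' (n m : ℝ) : Measure ℝ :=
  volume.withDensity fun x => ENNReal.ofReal
    (Set.indicator (Set.Ioo 0 1)
      (fun x => x ^ (n - 1) * (1 - x) ^ (m - 1) /
        (Real.Gamma n * Real.Gamma m / Real.Gamma (n + m))) x)

open MeasureTheory ProbabilityTheory Real Set Finset

noncomputable def rwaP (x : ℝ) (k : ℕ) : ℝ := ∏ i ∈ Finset.range k, (x + i)

lemma rwaP_zero (x : ℝ) : rwaP x 0 = 1 := by simp [rwaP]

lemma rwaP_succ (x : ℝ) (k : ℕ) : rwaP x (k+1) = rwaP x k * (x + k) := by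
  simp [rwaP, Finset.prod_range_succ]

lemma rwaP_pos {x : ℝ} (hx : 0 < x) (k : ℕ) : 0 < rwaP x k := by
  apply Finset.prod_pos
  intro i _
  positivity

lemma rwa_vandermonde (x y : ℝ) (k : ℕ) :
    ∑ j ∈ Finset.range (k+1), (k.choose j : ℝ) * rwaP x j * rwaP y (k - j)
      = rwaP (x + y) k := by
  induction k with
  | zero => simp [rwaP]
  | succ k ih =>
    have key : ∀ j ∈ Finset.range (k+1),
        (k.choose j : ℝ) * rwaP x j * rwaP y (k+1-j)
          = (k.choose j : ℝ) * rwaP x j * rwaP y (k-j) * (y + (k - j : ℕ)) := by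
      intro j hj
      have hj' : j ≤ k := Nat.lt_succ_iff.mp (Finset.mem_range.mp hj)
      have : k + 1 - j = (k - j) + 1 := by omega
      rw [this, rwaP_succ]
      ring
    calc ∑ j ∈ Finset.range (k+2), ((k+1).choose j : ℝ) * rwaP x j * rwaP y (k+1-j)
        = (∑ j ∈ Finset.range (k+1),
            ((k+1).choose (j+1) : ℝ) * rwaP x (j+1) * rwaP y (k-j))
          + ((k+1).choose 0 : ℝ) * rwaP x 0 * rwaP y (k+1) := by
          rw [Finset.sum_range_succ' (fun j => ((k+1).choose j : ℝ) * rwaP x j * rwaP y (k+1-j)) (k+1)]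
          congr 1
          apply Finset.sum_congr rfl
          intro j hj
          congr 2
          omega
      _ = (∑ j ∈ Finset.range (k+1),
            (k.choose j : ℝ) * rwaP x (j+1) * rwaP y (k-j))
          + ((∑ j ∈ Finset.range (k+1),
            (k.choose (j+1) : ℝ) * rwaP x (j+1) * rwaP y (k-j))
          + ((k+1).choose 0 : ℝ) * rwaP x 0 * rwaP y (k+1)) := by
          have : ∀ j ∈ Finset.range (k+1),
              ((k+1).choose (j+1) : ℝ) * rwaP x (j+1) * rwaP y (k-j)
                = (k.choose j : ℝ) * rwaP x (j+1) * rwaP y (k-j)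
                  + (k.choose (j+1) : ℝ) * rwaP x (j+1) * rwaP y (k-j) := by
            intro j hj
            rw [Nat.choose_succ_succ, Nat.cast_add]
            ring
          rw [Finset.sum_congr rfl this, Finset.sum_add_distrib, add_assoc]
      _ = (∑ j ∈ Finset.range (k+1),
            (k.choose j : ℝ) * rwaP x j * rwaP y (k-j) * (x + j))
          + (∑ j ∈ Finset.range (k+2),
            (k.choose j : ℝ) * rwaP x j * rwaP y (k+1-j)) := by
          congr 1
          · apply Finset.sum_congr rfl
            intro j hj
            rw [rwaP_succ]; ring
          · rw [Finset.sum_range_succ' (fun j => (k.choose j : ℝ) * rwaP x j * rwaP y (k+1-j)) (k+1)]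
            congr 1
            · apply Finset.sum_congr rfl
              intro j hj
              have : k + 1 - (j + 1) = k - j := by omega
              rw [this]
            · simp [rwaP]
      _ = (∑ j ∈ Finset.range (k+1),
            (k.choose j : ℝ) * rwaP x j * rwaP y (k-j) * (x + j))
          + (∑ j ∈ Finset.range (k+1),
            (k.choose j : ℝ) * rwaP x j * rwaP y (k-j) * (y + (k - j : ℕ))) := by
          congr 1
          rw [Finset.sum_range_succ]
          rw [Finset.sum_congr rfl key]
          simp
      _ = ∑ j ∈ Finset.range (k+1),
            (k.choose j : ℝ) * rwaP x j * rwaP y (k-j) * ((x+y) + k) := by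
          rw [← Finset.sum_add_distrib]
          apply Finset.sum_congr rfl
          intro j hj
          have hj' : j ≤ k := Nat.lt_succ_iff.mp (Finset.mem_range.mp hj)
          have : ((k - j : ℕ) : ℝ) = (k : ℝ) - j := by
            rw [Nat.cast_sub hj']
          rw [this]
          ring
      _ = rwaP (x+y) (k+1) := by
          rw [← Finset.sum_mul, ih, rwaP_succ]

lemma rwa_Gamma_add_nat {x : ℝ} (hx : 0 < x) (k : ℕ) :
    Real.Gamma (x + k) = Real.Gamma x * rwaP x k := by
  induction k with
  | zero => simp [rwaP]
  | succ k ih =>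
    have h1 : x + (k+1 : ℕ) = (x + k) + 1 := by push_cast; ring
    have h2 : x + (k : ℝ) ≠ 0 := by positivity
    rw [h1, Real.Gamma_add_one h2, ih, rwaP_succ]
    ring

noncomputable def rwaB (a b : ℝ) : ℝ := Real.Gamma a * Real.Gamma b / Real.Gamma (a + b)

lemma rwaB_pos {a b : ℝ} (ha : 0 < a) (hb : 0 < b) : 0 < rwaB a b := by
  have := Real.Gamma_pos_of_pos ha
  have := Real.Gamma_pos_of_pos hb
  have := Real.Gamma_pos_of_pos (by linarith : (0:ℝ) < a + b)
  exact div_pos (by positivity) (by assumption)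

lemma rwaB_ratio {a b : ℝ} (ha : 0 < a) (hb : 0 < b) (j l : ℕ) :
    rwaB (a + j) (b + l) / rwaB a b = rwaP a j * rwaP b l / rwaP (a+b) (j+l) := by
  have hab : (0:ℝ) < a + b := by linarith
  have h1 : (a + j) + (b + l) = (a + b) + ((j + l : ℕ) : ℝ) := by push_cast; ring
  have hga := Real.Gamma_pos_of_pos ha
  have hgb := Real.Gamma_pos_of_pos hb
  have hgab := Real.Gamma_pos_of_pos hab
  rw [rwaB, rwaB, rwa_Gamma_add_nat ha j, rwa_Gamma_add_nat hb l, h1,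
    rwa_Gamma_add_nat hab (j+l)]
  have hP := rwaP_pos hab (j+l)
  field_simp
section Part2
variable {a b : ℝ}

lemma rwa_cpow_eq (x : ℝ) (hx : 0 ≤ x) (c : ℝ) :
    (x:ℂ) ^ ((c:ℂ)-1) = Complex.ofReal (x ^ (c-1)) := by
  rw [Complex.ofReal_cpow hx]
  push_cast
  ring_nf

lemma rwa_heq (hab : True) : ∀ x ∈ Set.Ioo (0:ℝ) 1,
    (x:ℂ) ^ ((a:ℂ)-1) * ((1:ℂ)-x) ^ ((b:ℂ)-1)
      = Complex.ofReal (x ^ (a-1) * (1-x) ^ (b-1)) := by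
  intro x hx
  have h1 := rwa_cpow_eq x hx.1.le a
  have h2 := rwa_cpow_eq (1-x) (by linarith [hx.2]) b
  push_cast at h2
  rw [h1, h2, ← Complex.ofReal_mul]

lemma rwa_integrableOn_beta (ha : 0 < a) (hb : 0 < b) :
    IntegrableOn (fun x : ℝ => x ^ (a-1) * (1-x) ^ (b-1)) (Set.Ioo 0 1) volume := by
  have hc : IntegrableOn (fun x : ℝ => (x:ℂ) ^ ((a:ℂ)-1) * ((1:ℂ)-x) ^ ((b:ℂ)-1))
      (Set.Ioo 0 1) volume := by
    have h := Complex.betaIntegral_convergent (u := (a:ℂ)) (v := (b:ℂ))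
      (by simpa using ha) (by simpa using hb)
    have h2 := (intervalIntegrable_iff_integrableOn_Ioc_of_le (by norm_num : (0:ℝ) ≤ 1)).mp h
    exact h2.mono_set Set.Ioo_subset_Ioc_self
  have heq : Set.EqOn (fun x : ℝ => ((x:ℂ) ^ ((a:ℂ)-1) * ((1:ℂ)-x) ^ ((b:ℂ)-1)).re)
      (fun x : ℝ => x ^ (a-1) * (1-x) ^ (b-1)) (Set.Ioo 0 1) := by
    intro x hx
    simp only
    rw [rwa_heq trivial x hx, Complex.ofReal_re]
  exact IntegrableOn.congr_fun hc.re heq measurableSet_Ioo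

lemma rwa_integral_beta (ha : 0 < a) (hb : 0 < b) :
    ∫ x in Set.Ioo 0 1, x ^ (a-1) * (1-x) ^ (b-1) = rwaB a b := by
  have hab : (0:ℝ) < a + b := by linarith
  have hΓ : Complex.Gamma ((a:ℂ) + b) ≠ 0 := by
    rw [show ((a:ℂ) + b) = ((a+b : ℝ) : ℂ) by push_cast; ring, Complex.Gamma_ofReal]
    exact_mod_cast (Real.Gamma_pos_of_pos hab).ne'
  have hBI : Complex.betaIntegral a b
      = ((Real.Gamma a * Real.Gamma b / Real.Gamma (a+b) : ℝ) : ℂ) := by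
    have h := Complex.Gamma_mul_Gamma_eq_betaIntegral (s := (a:ℂ)) (t := (b:ℂ))
      (by simpa using ha) (by simpa using hb)
    have h3 : Complex.betaIntegral a b = Complex.Gamma a * Complex.Gamma b / Complex.Gamma (a+b) := by
      rw [eq_div_iff hΓ]
      linear_combination -h
    rw [h3, Complex.Gamma_ofReal, Complex.Gamma_ofReal,
      show ((a:ℂ) + b) = ((a+b : ℝ) : ℂ) by push_cast; ring, Complex.Gamma_ofReal]
    push_cast
    ring
  have hBI2 : Complex.betaIntegral a b
      = ((∫ x in Set.Ioo 0 1, x ^ (a-1) * (1-x) ^ (b-1) : ℝ) : ℂ) := by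
    rw [Complex.betaIntegral, intervalIntegral.integral_of_le (by norm_num : (0:ℝ) ≤ 1),
      MeasureTheory.integral_Ioc_eq_integral_Ioo,
      MeasureTheory.setIntegral_congr_fun measurableSet_Ioo (rwa_heq trivial)]
    exact integral_ofReal
  rw [hBI] at hBI2
  exact_mod_cast hBI2.symm
end Part2

section Part3
variable {a b : ℝ}

noncomputable def rwaDens (a b : ℝ) : ℝ → ℝ :=
  Set.indicator (Set.Ioo 0 1)
    (fun x => x ^ (a - 1) * (1 - x) ^ (b - 1) /
      (Real.Gamma a * Real.Gamma b / Real.Gamma (a + b)))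

lemma rwa_betaMeasure_eq (a b : ℝ) :
    betaMeasure' a b = volume.withDensity fun x => ENNReal.ofReal (rwaDens a b x) := rfl

lemma rwa_meas_rpow (c : ℝ) : Measurable fun x : ℝ => x ^ c := by
  apply measurable_of_continuousOn_compl_singleton 0
  intro x hx
  have hx' : x ≠ 0 := by simpa using hx
  exact (Real.continuousAt_rpow_const x c (Or.inl hx')).continuousWithinAt

lemma rwa_dens_meas (a b : ℝ) : Measurable (rwaDens a b) := by
  apply Measurable.indicator _ measurableSet_Ioo
  exact ((rwa_meas_rpow (a-1)).mul
    ((rwa_meas_rpow (b-1)).comp (measurable_const.sub measurable_id))).div_const _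

lemma rwa_dens_nonneg (ha : 0 < a) (hb : 0 < b) (x : ℝ) : 0 ≤ rwaDens a b x := by
  unfold rwaDens
  apply Set.indicator_nonneg
  intro y hy
  have h1 : (0:ℝ) < y := hy.1
  have h2 : (0:ℝ) < 1 - y := by linarith [hy.2]
  have := rwaB_pos ha hb
  unfold rwaB at this
  positivity

lemma rwa_dens_integrable (ha : 0 < a) (hb : 0 < b) : Integrable (rwaDens a b) volume := by
  rw [rwaDens, integrable_indicator_iff measurableSet_Ioo]
  exact (rwa_integrableOn_beta ha hb).div_const _

lemma rwa_dens_integral (ha : 0 < a) (hb : 0 < b) : ∫ x, rwaDens a b x = 1 := by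
  rw [rwaDens, integral_indicator measurableSet_Ioo, integral_div, rwa_integral_beta ha hb]
  exact div_self (rwaB_pos ha hb).ne'

lemma rwa_beta_isProb (ha : 0 < a) (hb : 0 < b) : IsProbabilityMeasure (betaMeasure' a b) := by
  constructor
  rw [rwa_betaMeasure_eq, withDensity_apply _ MeasurableSet.univ, Measure.restrict_univ,
    ← ofReal_integral_eq_lintegral_ofReal (rwa_dens_integrable ha hb)
      (ae_of_all _ (rwa_dens_nonneg ha hb)),
    rwa_dens_integral ha hb]
  simp

lemma rwa_beta_compl (a b : ℝ) : betaMeasure' a b ((Set.Ioo (0:ℝ) 1)ᶜ) = 0 := by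
  rw [rwa_betaMeasure_eq, withDensity_apply _ measurableSet_Ioo.compl]
  have : ∀ᵐ x ∂(volume.restrict (Set.Ioo (0:ℝ) 1)ᶜ),
      ENNReal.ofReal (rwaDens a b x) = 0 := by
    rw [ae_restrict_iff' measurableSet_Ioo.compl]
    refine ae_of_all _ fun x hx => ?_
    rw [rwaDens, Set.indicator_of_notMem hx]
    simp
  rw [lintegral_congr_ae this, lintegral_zero]

lemma rwa_beta_moment (ha : 0 < a) (hb : 0 < b) (j l : ℕ) :
    ∫ x, x ^ j * (1 - x) ^ l ∂(betaMeasure' a b)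
      = rwaP a j * rwaP b l / rwaP (a + b) (j + l) := by
  have hmeas : Measurable fun x : ℝ => (rwaDens a b x).toNNReal :=
    (rwa_dens_meas a b).real_toNNReal
  have hrw : betaMeasure' a b
      = volume.withDensity fun x => ((rwaDens a b x).toNNReal : ENNReal) := rfl
  rw [hrw, integral_withDensity_eq_integral_smul hmeas]
  have hsmul : ∀ x : ℝ, (rwaDens a b x).toNNReal • (x ^ j * (1 - x) ^ l)
      = Set.indicator (Set.Ioo 0 1)
          (fun x => (x ^ (a - 1) * (1 - x) ^ (b - 1) /
            (Real.Gamma a * Real.Gamma b / Real.Gamma (a + b))) * (x ^ j * (1 - x) ^ l)) x := by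
    intro x
    rw [NNReal.smul_def, Real.coe_toNNReal _ (rwa_dens_nonneg ha hb x), rwaDens,
      smul_eq_mul, Set.indicator_mul_left]
  rw [integral_congr_ae (ae_of_all _ hsmul), integral_indicator measurableSet_Ioo]
  have hEq : ∀ x ∈ Set.Ioo (0:ℝ) 1,
      (x ^ (a - 1) * (1 - x) ^ (b - 1) /
        (Real.Gamma a * Real.Gamma b / Real.Gamma (a + b))) * (x ^ j * (1 - x) ^ l)
      = (x ^ ((a + j) - 1) * (1 - x) ^ ((b + l) - 1)) / rwaB a b := by
    intro x hx
    have hx1 : (0:ℝ) < x := hx.1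
    have hx2 : (0:ℝ) < 1 - x := by linarith [hx.2]
    have e1 : (x:ℝ) ^ (j:ℕ) = x ^ ((j:ℕ):ℝ) := (Real.rpow_natCast x j).symm
    have e2 : (1-x:ℝ) ^ (l:ℕ) = (1-x) ^ ((l:ℕ):ℝ) := (Real.rpow_natCast (1-x) l).symm
    rw [e1, e2, rwaB]
    rw [div_mul_eq_mul_div, ← mul_assoc]
    congr 1
    calc x ^ (a-1) * (1-x) ^ (b-1) * x ^ ((j:ℕ):ℝ) * (1-x) ^ ((l:ℕ):ℝ)
        = (x ^ (a-1) * x ^ ((j:ℕ):ℝ)) * ((1-x) ^ (b-1) * (1-x) ^ ((l:ℕ):ℝ)) := by ring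
      _ = x ^ ((a + j) - 1) * (1-x) ^ ((b + l) - 1) := by
          rw [← Real.rpow_add hx1, ← Real.rpow_add hx2,
            show a - 1 + ((j:ℕ):ℝ) = a + j - 1 by ring,
            show b - 1 + ((l:ℕ):ℝ) = b + l - 1 by ring]
  rw [MeasureTheory.setIntegral_congr_fun measurableSet_Ioo hEq, integral_div,
    rwa_integral_beta (by positivity) (by positivity)]
  have := rwaB_ratio ha hb j l
  rw [← this, div_eq_div_iff (rwaB_pos ha hb).ne' (rwaB_pos ha hb).ne']
end Part3

section Part4

lemma rwa_moment_ext (μ ν : Measure ℝ) [IsProbabilityMeasure μ] [IsProbabilityMeasure ν]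
    (hμ : μ (Set.Icc (0:ℝ) 1)ᶜ = 0) (hν : ν (Set.Icc (0:ℝ) 1)ᶜ = 0)
    (h : ∀ k : ℕ, ∫ x, x ^ k ∂μ = ∫ x, x ^ k ∂ν) : μ = ν := by
  have aeμ : ∀ᵐ x ∂μ, x ∈ Set.Icc (0:ℝ) 1 := mem_ae_iff.mpr hμ
  have aeν : ∀ᵐ x ∂ν, x ∈ Set.Icc (0:ℝ) 1 := mem_ae_iff.mpr hν
  have hint : ∀ (ρ : Measure ℝ) (_ : IsProbabilityMeasure ρ)
      (_ : ∀ᵐ x ∂ρ, x ∈ Set.Icc (0:ℝ) 1) (k : ℕ),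
      Integrable (fun x : ℝ => x ^ k) ρ := by
    intro ρ _ aeρ k
    refine Integrable.mono' (integrable_const 1) ((measurable_id.pow_const k).aestronglyMeasurable) ?_
    filter_upwards [aeρ] with x hx
    rw [Real.norm_eq_abs, abs_pow]
    calc |x| ^ k ≤ 1 ^ k := by
          apply pow_le_pow_left₀ (abs_nonneg x)
          rw [abs_le]; exact ⟨by linarith [hx.1], hx.2⟩
      _ = 1 := one_pow k
  have hev : ∀ (p : Polynomial ℝ) (x : ℝ), p.eval x
      = ∑ i ∈ Finset.range (p.natDegree + 1), p.coeff i * x ^ i := by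
    intro p x
    rw [Polynomial.eval_eq_sum_range]
  have hpint : ∀ (ρ : Measure ℝ) (hρ : IsProbabilityMeasure ρ)
      (_ : ∀ᵐ x ∂ρ, x ∈ Set.Icc (0:ℝ) 1) (p : Polynomial ℝ),
      Integrable (fun x => p.eval x) ρ := by
    intro ρ hρ aeρ p
    have := integrable_finset_sum (μ := ρ) (Finset.range (p.natDegree + 1))
      (fun i _ => (hint ρ hρ aeρ i).const_mul (p.coeff i))
    exact this.congr (ae_of_all _ fun x => (hev p x).symm)
  have hpoly : ∀ p : Polynomial ℝ, ∫ x, p.eval x ∂μ = ∫ x, p.eval x ∂ν := by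
    intro p
    simp_rw [hev p]
    rw [integral_finset_sum _ (fun i _ => (hint μ inferInstance aeμ i).const_mul _),
      integral_finset_sum _ (fun i _ => (hint ν inferInstance aeν i).const_mul _)]
    apply Finset.sum_congr rfl
    intro i _
    rw [integral_const_mul, integral_const_mul, h i]
  have key : ∀ g : ℝ → ℝ, Continuous g → ∫ x, g x ∂μ = ∫ x, g x ∂ν := by
    intro g hg
    obtain ⟨C, hC⟩ : ∃ C, ∀ x ∈ Set.Icc (0:ℝ) 1, ‖g x‖ ≤ C :=
      (isCompact_Icc).exists_bound_of_continuousOn hg.continuousOn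
    have hgint : ∀ (ρ : Measure ℝ) (_ : IsProbabilityMeasure ρ)
        (_ : ∀ᵐ x ∂ρ, x ∈ Set.Icc (0:ℝ) 1), Integrable g ρ := by
      intro ρ _ aeρ
      refine Integrable.mono' (integrable_const C) hg.aestronglyMeasurable ?_
      filter_upwards [aeρ] with x hx
      exact hC x hx
    have h0 : ∀ ε : ℝ, 0 < ε → |∫ x, g x ∂μ - ∫ x, g x ∂ν| ≤ 2 * ε := by
      intro ε hε
      obtain ⟨p, hp⟩ := exists_polynomial_near_of_continuousOn 0 1 g hg.continuousOn ε hε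
      have hd : ∀ (ρ : Measure ℝ) (hρ : IsProbabilityMeasure ρ)
          (_ : ∀ᵐ x ∂ρ, x ∈ Set.Icc (0:ℝ) 1),
          |∫ x, g x ∂ρ - ∫ x, p.eval x ∂ρ| ≤ ε := by
        intro ρ hρ aeρ
        rw [← integral_sub (hgint ρ hρ aeρ) (hpint ρ hρ aeρ p)]
        have hb : ∀ᵐ x ∂ρ, ‖g x - p.eval x‖ ≤ ε := by
          filter_upwards [aeρ] with x hx
          rw [Real.norm_eq_abs, abs_sub_comm]
          exact (hp x hx).le
        have := norm_integral_le_of_norm_le_const (μ := ρ) hb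
        simpa using this
      calc |∫ x, g x ∂μ - ∫ x, g x ∂ν|
          ≤ |∫ x, g x ∂μ - ∫ x, p.eval x ∂μ| + |∫ x, p.eval x ∂μ - ∫ x, g x ∂ν| :=
            abs_sub_le _ _ _
        _ ≤ ε + ε := by
            apply add_le_add (hd μ inferInstance aeμ)
            rw [hpoly p, abs_sub_comm]
            exact hd ν inferInstance aeν
        _ = 2 * ε := by ring
    have habs : |∫ x, g x ∂μ - ∫ x, g x ∂ν| = 0 := by
      by_contra hne
      have hpos : 0 < |∫ x, g x ∂μ - ∫ x, g x ∂ν| :=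
        lt_of_le_of_ne (abs_nonneg _) (Ne.symm hne)
      have := h0 (|∫ x, g x ∂μ - ∫ x, g x ∂ν| / 4) (by positivity)
      linarith
    have := abs_eq_zero.mp habs
    linarith [sub_eq_zero.mp this]
  apply ext_of_forall_lintegral_eq_of_IsFiniteMeasure
  intro f
  have hfc : Continuous fun x : ℝ => (f x : ℝ) := NNReal.continuous_coe.comp f.continuous
  obtain ⟨D, hD⟩ := f.bounded
  have hfi : ∀ (ρ : Measure ℝ) (_ : IsProbabilityMeasure ρ),
      Integrable (fun x => (f x : ℝ)) ρ := by
    intro ρ _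
    refine Integrable.mono' (integrable_const ((f 0 : ℝ) + D)) hfc.aestronglyMeasurable ?_
    refine ae_of_all _ fun x => ?_
    have h1 := hD x 0
    rw [NNReal.dist_eq] at h1
    have h2 := abs_le.mp h1
    rw [Real.norm_eq_abs, abs_of_nonneg (f x).coe_nonneg]
    linarith [h2.2]
  rw [lintegral_coe_eq_integral _ (hfi μ inferInstance),
    lintegral_coe_eq_integral _ (hfi ν inferInstance), key _ hfc]
end Part4

section Part5

noncomputable def rwaClamp (x : ℝ) : ℝ := max 0 (min x 1)

lemma rwa_clamp_meas : Measurable rwaClamp :=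
  (measurable_const.max ((measurable_id.min measurable_const)))

lemma rwa_clamp_mem (x : ℝ) : rwaClamp x ∈ Set.Icc (0:ℝ) 1 := by
  constructor
  · exact le_max_left _ _
  · apply max_le (by norm_num)
    exact min_le_right _ _

lemma rwa_clamp_eq {x : ℝ} (hx : x ∈ Set.Ioo (0:ℝ) 1) : rwaClamp x = x := by
  rw [rwaClamp, min_eq_left hx.2.le, max_eq_right hx.1.le]

noncomputable def rwaF (k j : ℕ) : ℝ → ℝ := fun w => (rwaClamp w)^j * (1 - rwaClamp w)^(k-j)
noncomputable def rwaG (j : ℕ) : ℝ → ℝ := fun x => (rwaClamp x)^j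

lemma rwa_F_meas (k j : ℕ) : Measurable (rwaF k j) :=
  ((rwa_clamp_meas.pow_const j).mul ((measurable_const.sub rwa_clamp_meas).pow_const (k-j)))

lemma rwa_G_meas (j : ℕ) : Measurable (rwaG j) := rwa_clamp_meas.pow_const j

lemma rwa_F_nonneg (k j : ℕ) (w : ℝ) : 0 ≤ rwaF k j w := by
  have h := rwa_clamp_mem w
  have h1 : (0:ℝ) ≤ rwaClamp w := h.1
  have h2 : (0:ℝ) ≤ 1 - rwaClamp w := by linarith [h.2]
  exact mul_nonneg (pow_nonneg h1 j) (pow_nonneg h2 (k-j))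

lemma rwa_F_le_one (k j : ℕ) (w : ℝ) : rwaF k j w ≤ 1 := by
  have h := rwa_clamp_mem w
  have h2 : (0:ℝ) ≤ 1 - rwaClamp w := by linarith [h.2]
  calc (rwaClamp w)^j * (1 - rwaClamp w)^(k-j) ≤ 1 * 1 := by
        apply mul_le_mul (pow_le_one₀ h.1 h.2) (pow_le_one₀ h2 (by linarith [h.1]))
          (by positivity) (by norm_num)
    _ = 1 := by norm_num

lemma rwa_G_nonneg (j : ℕ) (x : ℝ) : 0 ≤ rwaG j x := pow_nonneg (rwa_clamp_mem x).1 j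

lemma rwa_G_le_one (j : ℕ) (x : ℝ) : rwaG j x ≤ 1 :=
  pow_le_one₀ (rwa_clamp_mem x).1 (rwa_clamp_mem x).2

lemma rwa_integral_F {a b : ℝ} (ha : 0 < a) (hb : 0 < b) (k j : ℕ) :
    ∫ x, rwaF k j x ∂(betaMeasure' a b)
      = rwaP a j * rwaP b (k-j) / rwaP (a+b) (j + (k-j)) := by
  have hae : ∀ᵐ x ∂(betaMeasure' a b), x ∈ Set.Ioo (0:ℝ) 1 :=
    mem_ae_iff.mpr (rwa_beta_compl a b)
  have : ∫ x, rwaF k j x ∂(betaMeasure' a b) = ∫ x, x^j * (1-x)^(k-j) ∂(betaMeasure' a b) := by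
    apply integral_congr_ae
    filter_upwards [hae] with x hx
    unfold rwaF
    rw [rwa_clamp_eq hx]
  rw [this, rwa_beta_moment ha hb j (k-j)]

lemma rwa_integral_G {a b : ℝ} (ha : 0 < a) (hb : 0 < b) (j : ℕ) :
    ∫ x, rwaG j x ∂(betaMeasure' a b) = rwaP a j / rwaP (a+b) j := by
  have hae : ∀ᵐ x ∂(betaMeasure' a b), x ∈ Set.Ioo (0:ℝ) 1 :=
    mem_ae_iff.mpr (rwa_beta_compl a b)
  have h1 : ∫ x, rwaG j x ∂(betaMeasure' a b) = ∫ x, x^j * (1-x)^(0:ℕ) ∂(betaMeasure' a b) := by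
    apply integral_congr_ae
    filter_upwards [hae] with x hx
    unfold rwaG
    rw [rwa_clamp_eq hx, pow_zero, mul_one]
  rw [h1, rwa_beta_moment ha hb j 0, rwaP_zero, mul_one, Nat.add_zero]

lemma rwa_ae_clamp {Ω : Type*} [MeasurableSpace Ω] (μ : Measure Ω) (V : Ω → ℝ)
    (hVm : Measurable V) {a b : ℝ} (hV : Measure.map V μ = betaMeasure' a b) :
    V =ᵐ[μ] fun ω => rwaClamp (V ω) := by
  have h1 : μ (V ⁻¹' (Set.Ioo (0:ℝ) 1)ᶜ) = 0 := by
    rw [← Measure.map_apply hVm measurableSet_Ioo.compl, hV]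
    exact rwa_beta_compl a b
  rw [Filter.EventuallyEq, ae_iff]
  apply measure_mono_null _ h1
  intro ω hω
  simp only [Set.mem_setOf_eq] at hω
  simp only [Set.mem_preimage, Set.mem_compl_iff]
  intro hmem
  exact hω (rwa_clamp_eq hmem).symm
end Part5

theorem rwa_beta_two {Ω : Type*} [MeasurableSpace Ω] (μ : Measure Ω)
    [IsProbabilityMeasure μ] (n₁ m₁ n₂ m₂ : ℝ)
    (hn₁ : 0 < n₁) (hm₁ : 0 < m₁) (hn₂ : 0 < n₂) (hm₂ : 0 < m₂)
    (W X₁ X₂ : Ω → ℝ) (hWm : Measurable W) (hX₁m : Measurable X₁)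
    (hX₂m : Measurable X₂)
    (hindep : iIndepFun ![W, X₁, X₂] μ)
    (hW : Measure.map W μ = betaMeasure' (n₁ + m₁) (n₂ + m₂))
    (hX₁ : Measure.map X₁ μ = betaMeasure' n₁ m₁)
    (hX₂ : Measure.map X₂ μ = betaMeasure' n₂ m₂) :
    Measure.map (fun ω => W ω * X₁ ω + (1 - W ω) * X₂ ω) μ =
      betaMeasure' (n₁ + n₂) (m₁ + m₂) := by
  have ha : (0:ℝ) < n₁ + m₁ := by linarith
  have hb : (0:ℝ) < n₂ + m₂ := by linarith
  have hm3 : ∀ i, Measurable (![W, X₁, X₂] i) := by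
    intro i
    fin_cases i <;> simpa
  have haeW := rwa_ae_clamp μ W hWm hW
  have haeX₁ := rwa_ae_clamp μ X₁ hX₁m hX₁
  have haeX₂ := rwa_ae_clamp μ X₂ hX₂m hX₂
  set T : Ω → ℝ := fun ω => W ω * X₁ ω + (1 - W ω) * X₂ ω with hT_def
  set T' : Ω → ℝ := fun ω =>
    rwaClamp (W ω) * rwaClamp (X₁ ω) + (1 - rwaClamp (W ω)) * rwaClamp (X₂ ω) with hT'_def
  have hTm : Measurable T := by
    apply Measurable.add
    · exact hWm.mul hX₁m
    · exact (measurable_const.sub hWm).mul hX₂m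
  have hT'm : Measurable T' := by
    apply Measurable.add
    · exact (rwa_clamp_meas.comp hWm).mul (rwa_clamp_meas.comp hX₁m)
    · exact (measurable_const.sub (rwa_clamp_meas.comp hWm)).mul (rwa_clamp_meas.comp hX₂m)
  have haeT : T =ᵐ[μ] T' := by
    filter_upwards [haeW, haeX₁, haeX₂] with ω h1 h2 h3
    simp only [hT_def, hT'_def, ← h1, ← h2, ← h3]
  have hmapT : Measure.map T μ = Measure.map T' μ := Measure.map_congr haeT
  have hprob1 : IsProbabilityMeasure (Measure.map T μ) :=
    Measure.isProbabilityMeasure_map hTm.aemeasurable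
  have hprob2 : IsProbabilityMeasure (betaMeasure' (n₁+n₂) (m₁+m₂)) :=
    rwa_beta_isProb (by linarith) (by linarith)
  have hT'mem : ∀ ω, T' ω ∈ Set.Icc (0:ℝ) 1 := by
    intro ω
    obtain ⟨hu1, hu2⟩ := rwa_clamp_mem (W ω)
    obtain ⟨hv1, hv2⟩ := rwa_clamp_mem (X₁ ω)
    obtain ⟨hw1, hw2⟩ := rwa_clamp_mem (X₂ ω)
    constructor
    · have := mul_nonneg hu1 hv1
      have := mul_nonneg (by linarith : (0:ℝ) ≤ 1 - rwaClamp (W ω)) hw1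
      simp only [hT'_def]
      linarith
    · simp only [hT'_def]
      have h1 : rwaClamp (W ω) * rwaClamp (X₁ ω) ≤ rwaClamp (W ω) * 1 :=
        mul_le_mul_of_nonneg_left hv2 hu1
      have h2 : (1 - rwaClamp (W ω)) * rwaClamp (X₂ ω) ≤ (1 - rwaClamp (W ω)) * 1 :=
        mul_le_mul_of_nonneg_left hw2 (by linarith)
      linarith
  have hsupp1 : Measure.map T μ (Set.Icc (0:ℝ) 1)ᶜ = 0 := by
    rw [hmapT, Measure.map_apply hT'm measurableSet_Icc.compl]
    have : T' ⁻¹' (Set.Icc (0:ℝ) 1)ᶜ = ∅ := by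
      ext ω
      simp only [Set.mem_preimage, Set.mem_compl_iff, Set.mem_empty_iff_false, iff_false,
        not_not]
      exact hT'mem ω
    rw [this, measure_empty]
  have hsupp2 : betaMeasure' (n₁+n₂) (m₁+m₂) (Set.Icc (0:ℝ) 1)ᶜ = 0 :=
    measure_mono_null (Set.compl_subset_compl.mpr Set.Ioo_subset_Icc_self)
      (rwa_beta_compl _ _)
  have I1 : IndepFun (fun ω => (W ω, X₁ ω)) X₂ μ := by
    have := hindep.indepFun_prodMk hm3 0 1 2 (by decide) (by decide)
    simpa using this
  have I2 : IndepFun W X₁ μ := by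
    have := hindep.indepFun (show (0:Fin 3) ≠ 1 by decide)
    simpa using this
  have hmom : ∀ k : ℕ, ∫ x, x^k ∂(Measure.map T μ)
      = ∫ x, x^k ∂(betaMeasure' (n₁+n₂) (m₁+m₂)) := by
    intro k
    have hRHS : ∫ x, x^k ∂(betaMeasure' (n₁+n₂) (m₁+m₂))
        = rwaP (n₁+n₂) k / rwaP ((n₁+n₂) + (m₁+m₂)) k := by
      have h := rwa_beta_moment (show (0:ℝ) < n₁+n₂ by linarith)
        (show (0:ℝ) < m₁+m₂ by linarith) k 0
      simp only [pow_zero, mul_one, Nat.add_zero, rwaP_zero] at h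
      exact h
    rw [hRHS, hmapT,
      integral_map (f := fun x => x^k) hT'm.aemeasurable
        ((measurable_id.pow_const k).aestronglyMeasurable)]
    have hexp : ∀ ω, (T' ω)^k = ∑ j ∈ Finset.range (k+1),
        (k.choose j : ℝ) * (rwaF k j (W ω) * rwaG j (X₁ ω) * rwaG (k-j) (X₂ ω)) := by
      intro ω
      simp only [hT'_def]
      rw [add_pow]
      apply Finset.sum_congr rfl
      intro j hj
      rw [mul_pow, mul_pow]
      simp only [rwaF, rwaG]
      ring
    rw [integral_congr_ae (ae_of_all _ hexp)]
    have hintg : ∀ j : ℕ, Integrable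
        (fun ω => rwaF k j (W ω) * rwaG j (X₁ ω) * rwaG (k-j) (X₂ ω)) μ := by
      intro j
      refine Integrable.mono' (integrable_const 1) (Measurable.aestronglyMeasurable ?_)
        (ae_of_all _ ?_)
      · exact (((rwa_F_meas k j).comp hWm).mul ((rwa_G_meas j).comp hX₁m)).mul
          ((rwa_G_meas (k-j)).comp hX₂m)
      · intro ω
        rw [Real.norm_eq_abs, abs_of_nonneg (mul_nonneg
          (mul_nonneg (rwa_F_nonneg k j _) (rwa_G_nonneg j _)) (rwa_G_nonneg (k-j) _))]
        calc rwaF k j (W ω) * rwaG j (X₁ ω) * rwaG (k-j) (X₂ ω)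
            ≤ 1 * 1 * 1 := by
              apply mul_le_mul _ (rwa_G_le_one (k-j) _) (rwa_G_nonneg (k-j) _) (by norm_num)
              apply mul_le_mul (rwa_F_le_one k j _) (rwa_G_le_one j _) (rwa_G_nonneg j _)
                (by norm_num)
          _ = 1 := by norm_num
    rw [integral_finset_sum _ (fun j _ => (hintg j).const_mul _)]
    have hfact : ∀ j : ℕ, ∫ ω, rwaF k j (W ω) * rwaG j (X₁ ω) * rwaG (k-j) (X₂ ω) ∂μ
        = (∫ x, rwaF k j x ∂(Measure.map W μ)) * (∫ x, rwaG j x ∂(Measure.map X₁ μ))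
          * (∫ x, rwaG (k-j) x ∂(Measure.map X₂ μ)) := by
      intro j
      have J1 : IndepFun (fun ω => rwaF k j (W ω) * rwaG j (X₁ ω))
          (fun ω => rwaG (k-j) (X₂ ω)) μ := by
        have hφ : Measurable fun p : ℝ × ℝ => rwaF k j p.1 * rwaG j p.2 :=
          ((rwa_F_meas k j).comp measurable_fst).mul ((rwa_G_meas j).comp measurable_snd)
        exact I1.comp hφ (rwa_G_meas (k-j))
      have J2 : IndepFun (fun ω => rwaF k j (W ω)) (fun ω => rwaG j (X₁ ω)) μ :=
        I2.comp (rwa_F_meas k j) (rwa_G_meas j)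
      have e1 : ∫ ω, rwaF k j (W ω) * rwaG j (X₁ ω) * rwaG (k-j) (X₂ ω) ∂μ
          = (∫ ω, rwaF k j (W ω) * rwaG j (X₁ ω) ∂μ) * ∫ ω, rwaG (k-j) (X₂ ω) ∂μ := by
        have := J1.integral_fun_mul_eq_mul_integral
          ((((rwa_F_meas k j).comp hWm).mul ((rwa_G_meas j).comp hX₁m)).aestronglyMeasurable)
          (((rwa_G_meas (k-j)).comp hX₂m).aestronglyMeasurable)
        exact this
      have e2 : ∫ ω, rwaF k j (W ω) * rwaG j (X₁ ω) ∂μ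
          = (∫ ω, rwaF k j (W ω) ∂μ) * ∫ ω, rwaG j (X₁ ω) ∂μ := by
        have := J2.integral_fun_mul_eq_mul_integral
          (((rwa_F_meas k j).comp hWm).aestronglyMeasurable)
          (((rwa_G_meas j).comp hX₁m).aestronglyMeasurable)
        exact this
      rw [e1, e2,
        integral_map hWm.aemeasurable (rwa_F_meas k j).aestronglyMeasurable,
        integral_map hX₁m.aemeasurable (rwa_G_meas j).aestronglyMeasurable,
        integral_map hX₂m.aemeasurable (rwa_G_meas (k-j)).aestronglyMeasurable]
    have hterm : ∀ j ∈ Finset.range (k+1),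
        (k.choose j : ℝ) * ∫ ω, rwaF k j (W ω) * rwaG j (X₁ ω) * rwaG (k-j) (X₂ ω) ∂μ
          = (k.choose j : ℝ) * rwaP n₁ j * rwaP n₂ (k-j) / rwaP ((n₁+m₁) + (n₂+m₂)) k := by
      intro j hj
      have hjk : j ≤ k := Nat.lt_succ_iff.mp (Finset.mem_range.mp hj)
      rw [hfact j, hW, hX₁, hX₂, rwa_integral_F ha hb k j, rwa_integral_G hn₁ hm₁ j,
        rwa_integral_G hn₂ hm₂ (k-j), show j + (k-j) = k by omega]
      have p1 := rwaP_pos ha j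
      have p2 := rwaP_pos hb (k-j)
      have p3 := rwaP_pos (show (0:ℝ) < (n₁+m₁)+(n₂+m₂) by linarith) k
      field_simp
    calc ∑ j ∈ Finset.range (k+1),
          ∫ ω, (k.choose j : ℝ) * (rwaF k j (W ω) * rwaG j (X₁ ω) * rwaG (k-j) (X₂ ω)) ∂μ
        = ∑ j ∈ Finset.range (k+1),
          (k.choose j : ℝ) * ∫ ω, rwaF k j (W ω) * rwaG j (X₁ ω) * rwaG (k-j) (X₂ ω) ∂μ := by
          apply Finset.sum_congr rfl
          intro j _
          rw [integral_const_mul]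
      _ = ∑ j ∈ Finset.range (k+1),
          (k.choose j : ℝ) * rwaP n₁ j * rwaP n₂ (k-j) / rwaP ((n₁+m₁) + (n₂+m₂)) k :=
          Finset.sum_congr rfl hterm
      _ = (∑ j ∈ Finset.range (k+1),
          (k.choose j : ℝ) * rwaP n₁ j * rwaP n₂ (k-j)) / rwaP ((n₁+m₁) + (n₂+m₂)) k := by
          rw [Finset.sum_div]
      _ = rwaP (n₁+n₂) k / rwaP ((n₁+n₂) + (m₁+m₂)) k := by
          rw [rwa_vandermonde n₁ n₂ k,
            show (n₁+m₁) + (n₂+m₂) = (n₁+n₂) + (m₁+m₂) by ring]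
  have := rwa_moment_ext (Measure.map T μ) (betaMeasure' (n₁+n₂) (m₁+m₂)) hsupp1 hsupp2 hmom
  exact this
end

section
/- If W ∼ Beta(2,2) is independent of X_1, X_2 which are independent Uniform(0,1) random variables, then W X_1 + (1 − W) X_2 has the Beta(2,2) distribution, with density 6x(1−x) on (0,1). -/
set_option maxHeartbeats 1000000
open MeasureTheory ProbabilityTheory Real Set

lemma beta22_eq : betaMeasure' 2 2 = volume.withDensity fun x => ENNReal.ofReal
    (Set.indicator (Set.Ioo 0 1) (fun x => 6 * x * (1 - x)) x) := by
  unfold betaMeasure'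
  congr 1
  funext x
  congr 1
  have h4 : Real.Gamma (2 + 2 : ℝ) = 6 := by
    have : ((2:ℝ) + 2) = (3:ℕ) + 1 := by norm_num
    rw [this, Real.Gamma_nat_eq_factorial]
    simp [Nat.factorial]
  have h2 : Real.Gamma (2:ℝ) = 1 := by
    have : ((2:ℝ)) = (1:ℕ) + 1 := by norm_num
    rw [this, Real.Gamma_nat_eq_factorial]
    norm_num
  unfold Set.indicator
  split
  · rw [h4, h2]; norm_num [Real.rpow_natCast]; ring
  · rfl

lemma beta22_apply {s : Set ℝ} (hs : MeasurableSet s) :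
    betaMeasure' 2 2 s = ∫⁻ x in s ∩ Ioo 0 1, ENNReal.ofReal (6 * x * (1 - x)) := by
  rw [beta22_eq, withDensity_apply _ hs]
  have : ∀ x : ℝ, ENNReal.ofReal ((Ioo (0:ℝ) 1).indicator (fun x => 6 * x * (1 - x)) x)
      = (Ioo (0:ℝ) 1).indicator (fun x => ENNReal.ofReal (6 * x * (1 - x))) x := by
    intro x
    by_cases h : x ∈ Ioo (0:ℝ) 1 <;> simp [h]
  simp_rw [this]
  rw [lintegral_indicator measurableSet_Ioo, Measure.restrict_restrict measurableSet_Ioo, inter_comm]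

lemma lint_beta (a b : ℝ) (ha : 0 ≤ a) (hab : a ≤ b) (hb : b ≤ 1) :
    ∫⁻ x in Ioc a b, ENNReal.ofReal (6 * x * (1 - x)) =
      ENNReal.ofReal ((3*b^2 - 2*b^3) - (3*a^2 - 2*a^3)) := by
  rw [← ofReal_integral_eq_lintegral_ofReal]
  · congr 1
    rw [← intervalIntegral.integral_of_le hab]
    have : ∀ x ∈ Set.uIcc a b, HasDerivAt (fun x : ℝ => 3*x^2 - 2*x^3) (6*x*(1-x)) x := by
      intro x _
      have h := ((hasDerivAt_pow 2 x).const_mul (3:ℝ)).sub ((hasDerivAt_pow 3 x).const_mul (2:ℝ))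
      refine h.congr_deriv ?_
      push_cast
      ring
    rw [intervalIntegral.integral_eq_sub_of_hasDerivAt this]
    · exact (Continuous.intervalIntegrable (by continuity) a b)
  · exact (Continuous.integrableOn_Ioc (by continuity))
  · filter_upwards [ae_restrict_mem measurableSet_Ioc] with x hx
    have h1 : 0 ≤ x := le_trans ha (le_of_lt hx.1)
    have h2 : x ≤ 1 := le_trans hx.2 hb
    simp only [Pi.zero_apply]
    nlinarith

lemma beta22_Iic (u : ℝ) :
    betaMeasure' 2 2 (Iic u) = ENNReal.ofReal (if u ≤ 0 then 0 else if u ≤ 1 then 3*u^2 - 2*u^3 else 1) := by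
  rw [beta22_apply measurableSet_Iic]
  split
  · next h =>
    have : Iic u ∩ Ioo (0:ℝ) 1 = ∅ := by
      ext x; simp only [mem_inter_iff, mem_Iic, mem_Ioo, mem_empty_iff_false, iff_false]
      rintro ⟨h1, h2, _⟩; linarith
    rw [this]; simp
  · next h =>
    push_neg at h
    split
    · next hu1 =>
      have : Iic u ∩ Ioo (0:ℝ) 1 = Ioc 0 u ∩ Ioo 0 1 := by
        ext x; constructor
        · rintro ⟨h1, h2, h3⟩; exact ⟨⟨h2, h1⟩, h2, h3⟩
        · rintro ⟨⟨h1, h2⟩, h3⟩; exact ⟨h2, h3⟩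
      rw [this]
      rcases lt_or_ge u 1 with hu | hu
      · have : Ioc 0 u ∩ Ioo (0:ℝ) 1 = Ioc 0 u := by
          apply inter_eq_left.2
          intro x hx; exact ⟨hx.1, lt_of_le_of_lt hx.2 hu⟩
        rw [this, lint_beta 0 u le_rfl h.le hu1]
        norm_num
      · have hu1' : u = 1 := le_antisymm hu1 hu
        subst hu1'
        have : Ioc (0:ℝ) 1 ∩ Ioo (0:ℝ) 1 = Ioo 0 1 := by
          apply inter_eq_right.2; intro x hx; exact ⟨hx.1, hx.2.le⟩
        rw [this, Measure.restrict_congr_set Ioo_ae_eq_Ioc,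
          lint_beta 0 1 le_rfl zero_le_one le_rfl]
        norm_num
    · next hu1 =>
      push_neg at hu1
      have : Iic u ∩ Ioo (0:ℝ) 1 = Ioo 0 1 := by
        apply inter_eq_right.2; intro x hx; exact le_of_lt (lt_trans hx.2 hu1)
      rw [this, Measure.restrict_congr_set Ioo_ae_eq_Ioc,
        lint_beta 0 1 le_rfl zero_le_one le_rfl]
      norm_num

lemma beta22_Ioo : betaMeasure' 2 2 (Ioo 0 1) = 1 := by
  rw [beta22_apply measurableSet_Ioo, inter_self,
    Measure.restrict_congr_set Ioo_ae_eq_Ioc, lint_beta 0 1 le_rfl zero_le_one le_rfl]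
  norm_num

lemma beta22_univ : betaMeasure' 2 2 univ = 1 := by
  rw [beta22_apply MeasurableSet.univ, univ_inter,
    Measure.restrict_congr_set Ioo_ae_eq_Ioc, lint_beta 0 1 le_rfl zero_le_one le_rfl]
  norm_num

instance : IsProbabilityMeasure (betaMeasure' 2 2) := ⟨beta22_univ⟩

lemma beta22_inter {s : Set ℝ} (hs : MeasurableSet s) :
    betaMeasure' 2 2 s = betaMeasure' 2 2 (s ∩ Ioo 0 1) := by
  rw [beta22_apply hs, beta22_apply (hs.inter measurableSet_Ioo), inter_assoc, inter_self]

lemma beta22_one {s : Set ℝ} (hs : MeasurableSet s) (h : Ioo 0 1 ⊆ s) :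
    betaMeasure' 2 2 s = 1 := by
  refine le_antisymm prob_le_one ?_
  rw [← beta22_Ioo]
  exact measure_mono h

lemma beta22_zero {s : Set ℝ} (hs : MeasurableSet s) (h : s ∩ Ioo 0 1 = ∅) :
    betaMeasure' 2 2 s = 0 := by
  rw [beta22_inter hs, h, measure_empty]

lemma beta22_Ici (u : ℝ) :
    betaMeasure' 2 2 (Ici u) = ENNReal.ofReal (if u ≤ 0 then 1 else if u ≤ 1 then 1 - (3*u^2 - 2*u^3) else 0) := by
  have hsing : betaMeasure' 2 2 {u} = 0 := by
    rw [beta22_apply (measurableSet_singleton u)]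
    apply setLIntegral_measure_zero
    exact measure_mono_null inter_subset_left volume_singleton
  have hIio : betaMeasure' 2 2 (Iio u) = betaMeasure' 2 2 (Iic u) := by
    refine le_antisymm (measure_mono Iio_subset_Iic_self) ?_
    calc betaMeasure' 2 2 (Iic u) = betaMeasure' 2 2 (Iio u ∪ {u}) := by
          rw [Set.Iio_union_right]
      _ ≤ betaMeasure' 2 2 (Iio u) + betaMeasure' 2 2 {u} := measure_union_le _ _
      _ = betaMeasure' 2 2 (Iio u) := by rw [hsing, add_zero]
  have hc : betaMeasure' 2 2 (Ici u) = 1 - betaMeasure' 2 2 (Iio u) := by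
    rw [← compl_Iio]
    rw [measure_compl measurableSet_Iio (measure_ne_top _ _), beta22_univ]
  rw [hc, hIio, beta22_Iic]
  split
  · next h => simp
  · next h =>
    push_neg at h
    split
    · next h1 =>
      rw [← ENNReal.ofReal_one, ← ENNReal.ofReal_sub]
      nlinarith
    · next h1 =>
      push_neg at h1
      rw [← ENNReal.ofReal_one, ← ENNReal.ofReal_sub]
      · norm_num
      · norm_num

-- set identification
lemma set_lt {x y t : ℝ} (h : y < x) :
    {w : ℝ | w * x + (1 - w) * y ≤ t} = Iic ((t - y) / (x - y)) := by
  ext w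
  simp only [mem_setOf_eq, mem_Iic]
  rw [le_div_iff₀ (by linarith)]
  constructor <;> intro <;> nlinarith

lemma set_gt {x y t : ℝ} (h : x < y) :
    {w : ℝ | w * x + (1 - w) * y ≤ t} = Ici ((t - y) / (x - y)) := by
  ext w
  simp only [mem_setOf_eq, mem_Ici]
  rw [div_le_iff_of_neg (by linarith)]
  constructor <;> intro <;> nlinarith

lemma set_meas (x y t : ℝ) : MeasurableSet {w : ℝ | w * x + (1 - w) * y ≤ t} := by
  apply measurableSet_le _ measurable_const
  fun_prop

-- generic FTC helper
lemma lint_deriv {a b : ℝ} (hab : a ≤ b) {f F : ℝ → ℝ}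
    (hd : ∀ y ∈ Set.uIcc a b, HasDerivAt F (f y) y)
    (hc : ContinuousOn f (Set.uIcc a b))
    (h0 : ∀ y ∈ Set.Ioc a b, 0 ≤ f y) :
    ∫⁻ y in Ioc a b, ENNReal.ofReal (f y) = ENNReal.ofReal (F b - F a) := by
  have huIcc : Set.uIcc a b = Icc a b := uIcc_of_le hab
  have hInt : IntegrableOn f (Icc a b) volume := by
    apply ContinuousOn.integrableOn_Icc
    rwa [huIcc] at hc
  rw [← ofReal_integral_eq_lintegral_ofReal (hInt.mono_set Ioc_subset_Icc_self)]
  · congr 1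
    rw [← intervalIntegral.integral_of_le hab,
      intervalIntegral.integral_eq_sub_of_hasDerivAt hd (hc.intervalIntegrable)]
  · filter_upwards [ae_restrict_mem measurableSet_Ioc] with y hy
    exact h0 y hy

lemma Ioo_split {t : ℝ} (ht : t ∈ Ioo (0:ℝ) 1) : Ioo (0:ℝ) 1 = Ioc 0 t ∪ Ioo t 1 := by
  obtain ⟨ht0, ht1⟩ := ht
  ext z
  simp only [mem_Ioo, mem_union, mem_Ioc]
  constructor
  · rintro ⟨h1, h2⟩
    rcases le_or_gt z t with h | h
    · exact Or.inl ⟨h1, h⟩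
    · exact Or.inr ⟨h, h2⟩
  · rintro (⟨h1, h2⟩ | ⟨h1, h2⟩)
    · exact ⟨h1, lt_of_le_of_lt h2 ht1⟩
    · exact ⟨lt_trans ht0 h1, h2⟩

lemma Ioc_Ioo_disj {t : ℝ} : Disjoint (Ioc (0:ℝ) t) (Ioo t 1) := by
  rw [Set.disjoint_left]
  rintro a ⟨h1, h2⟩ ⟨h3, h4⟩
  linarith

lemma middle {x t : ℝ} (hx : x ∈ Ioo (0:ℝ) 1) (ht : t ∈ Ioo (0:ℝ) 1) :
    ∫⁻ y in Ioo 0 1, betaMeasure' 2 2 {w | w * x + (1 - w) * y ≤ t} =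
      ENNReal.ofReal (if x ≤ t then 1 - (1-t)^3/(1-x)^2 else t^3/x^2) := by
  obtain ⟨hx0, hx1⟩ := hx
  obtain ⟨ht0, ht1⟩ := ht
  rw [Ioo_split ⟨ht0, ht1⟩, lintegral_union measurableSet_Ioo Ioc_Ioo_disj]
  by_cases hxt : x ≤ t
  · -- case x ≤ t
    rw [if_pos hxt]
    have part1 : ∫⁻ y in Ioc 0 t, betaMeasure' 2 2 {w | w * x + (1 - w) * y ≤ t}
        = ENNReal.ofReal t := by
      rw [setLIntegral_congr_fun_ae measurableSet_Ioc
        (ae_of_all _ (fun y (hy : y ∈ Ioc 0 t) => beta22_one (set_meas x y t)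
          (fun w hw => by
            simp only [mem_setOf_eq]
            have h1 := hw.1; have h2 := hw.2; have h3 := hy.2
            nlinarith)))]
      simp [Real.volume_Ioc, ht0.le]
    by_cases hxe : x = t
    · subst hxe
      have part2 : ∫⁻ y in Ioo x 1, betaMeasure' 2 2 {w | w * x + (1 - w) * y ≤ x} = 0 := by
        rw [setLIntegral_congr_fun_ae measurableSet_Ioo
          (ae_of_all _ (fun y (hy : y ∈ Ioo x 1) => ?_)), lintegral_zero]
        have hyx : x < y := hy.1
        rw [set_gt hyx, beta22_Ici]
        have hc : (x - y) / (x - y) = 1 := div_self (by linarith)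
        rw [hc]
        norm_num
      rw [part1, part2, add_zero]
      congr 1
      have h1x : (1:ℝ) - x ≠ 0 := by linarith
      field_simp
      ring
    · have hxt' : x < t := lt_of_le_of_ne hxt hxe
      set b : ℝ := t - x with hb
      have hbpos : 0 < b := by simp [hb]; linarith
      have part2 : ∫⁻ y in Ioo t 1, betaMeasure' 2 2 {w | w * x + (1 - w) * y ≤ t}
          = ENNReal.ofReal ((-3*b^2 * ((1:ℝ)-x)⁻¹ + b^3 * (((1:ℝ)-x)^2)⁻¹) -
              (-3*b^2 * (t-x)⁻¹ + b^3 * ((t-x)^2)⁻¹)) := by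
        rw [Measure.restrict_congr_set Ioo_ae_eq_Ioc]
        rw [setLIntegral_congr_fun_ae measurableSet_Ioc (ae_of_all _
          (fun y (hy : y ∈ Ioc t 1) => ?_))]
        · exact lint_deriv ht1.le
            (f := fun y => 3*b^2/(y-x)^2 - 2*b^3/(y-x)^3)
            (F := fun y => -3*b^2 * ((y:ℝ)-x)⁻¹ + b^3 * (((y:ℝ)-x)^2)⁻¹)
            (fun y hy => by
              rw [uIcc_of_le ht1.le] at hy
              have hyx : x < y := lt_of_lt_of_le hxt' hy.1
              have hne : y - x ≠ 0 := by linarith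
              have h1 : HasDerivAt (fun y : ℝ => y - x) 1 y := (hasDerivAt_id y).sub_const x
              have h2 := (h1.inv hne).const_mul (-3*b^2)
              have h3 := ((h1.pow 2).inv (pow_ne_zero 2 hne)).const_mul (b^3)
              refine (h2.add h3).congr_deriv ?_
              simp only [Pi.pow_apply, Pi.inv_apply]
              field_simp
              ring)
            (by
              rw [uIcc_of_le ht1.le]
              apply ContinuousOn.sub
              · exact continuousOn_const.div (by fun_prop) (fun y hy =>
                  pow_ne_zero 2 (sub_ne_zero.2 (by intro h; subst h; exact absurd hy.1 (not_le.2 hxt'))))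
              · exact continuousOn_const.div (by fun_prop) (fun y hy =>
                  pow_ne_zero 3 (sub_ne_zero.2 (by intro h; subst h; exact absurd hy.1 (not_le.2 hxt')))))
            (fun y hy => by
              have hyx : x < y := lt_trans hxt' hy.1
              have hd : (0:ℝ) < y - x := by linarith
              show (0:ℝ) ≤ 3*b^2/(y-x)^2 - 2*b^3/(y-x)^3
              have hval : 3*b^2/(y-x)^2 - 2*b^3/(y-x)^3 = b^2*(3*(y-x)-2*b)/(y-x)^3 := by
                field_simp
              rw [hval]
              apply div_nonneg
              · have : 2*b ≤ 2*(y-x) := by simp [hb]; linarith [hy.1]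
                nlinarith
              · positivity)
        · have hyx : x < y := lt_trans hxt' hy.1
          rw [set_gt hyx, beta22_Ici]
          have hc0 : (t - y) / (x - y) = (y - t) / (y - x) := by
            rw [div_eq_div_iff (by linarith) (by linarith)]
            ring
          rw [hc0]
          have hden : (0:ℝ) < y - x := by linarith
          have hyt : t < y := hy.1
          have hcpos : 0 < (y - t) / (y - x) := div_pos (by linarith) (by linarith)
          rw [if_neg (not_le.2 hcpos), if_pos (by
            rw [div_le_one hden]; linarith)]
          congr 1
          field_simp
          ring
      rw [part1, part2, ← ENNReal.ofReal_add ht0.le ?_]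
      · congr 1
        have h1 : (1:ℝ) - x ≠ 0 := by linarith
        have h2 : t - x ≠ 0 := by linarith
        field_simp
        ring
      · have h1 : (0:ℝ) < 1 - x := by linarith
        have h2 : (0:ℝ) < t - x := hbpos
        have key : (-3*b^2 * ((1:ℝ)-x)⁻¹ + b^3 * (((1:ℝ)-x)^2)⁻¹) -
            (-3*b^2 * (t-x)⁻¹ + b^3 * ((t-x)^2)⁻¹) = (1 - t) - (1-t)^3/(1-x)^2 := by
          simp only [hb]
          field_simp
          ring
        rw [key]
        rw [sub_nonneg, div_le_iff₀ (by positivity)]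
        have e1 : (0:ℝ) ≤ 1 - t := by linarith
        have e2 : (1:ℝ) - t ≤ 1 - x := by linarith
        nlinarith [mul_le_mul_of_nonneg_left
          (by nlinarith : (1-t)^2 ≤ (1-x)^2) e1]
  · -- case t < x
    push_neg at hxt
    rw [if_neg (not_le.2 hxt)]
    have part2 : ∫⁻ y in Ioo t 1, betaMeasure' 2 2 {w | w * x + (1 - w) * y ≤ t} = 0 := by
      rw [setLIntegral_congr_fun_ae measurableSet_Ioo (ae_of_all _
        (fun y (hy : y ∈ Ioo t 1) => beta22_zero (set_meas x y t) ?_)), lintegral_zero]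
      ext w
      simp only [mem_inter_iff, mem_setOf_eq, mem_Ioo, mem_empty_iff_false, iff_false, not_and]
      intro h1 h2 h3
      have := hy.1
      nlinarith
    have part1 : ∫⁻ y in Ioc 0 t, betaMeasure' 2 2 {w | w * x + (1 - w) * y ≤ t}
        = ENNReal.ofReal (t^3/x^2) := by
      rw [setLIntegral_congr_fun_ae measurableSet_Ioc (ae_of_all _
        (fun y (hy : y ∈ Ioc 0 t) => ?_))]
      · have := lint_deriv ht0.le
          (f := fun y => 3*(t-y)^2/(x-y)^2 - 2*(t-y)^3/(x-y)^3)
          (F := fun y => -((t-y)^3 * (((x:ℝ)-y)^2)⁻¹))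
          (fun y hy => by
            rw [uIcc_of_le ht0.le] at hy
            have hyx : y < x := lt_of_le_of_lt hy.2 hxt
            have hne : x - y ≠ 0 := by linarith
            have h1 : HasDerivAt (fun y : ℝ => t - y) (-1) y := by
              simpa using ((hasDerivAt_id y).const_sub t)
            have h1' : HasDerivAt (fun y : ℝ => x - y) (-1) y := by
              simpa using ((hasDerivAt_id y).const_sub x)
            have h2 := (h1.pow 3)
            have h3 := (h1'.pow 2).inv (pow_ne_zero 2 hne)
            refine (h2.mul h3).neg.congr_deriv ?_
            simp only [Pi.pow_apply, Pi.inv_apply]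
            field_simp
            ring)
          (by
            rw [uIcc_of_le ht0.le]
            apply ContinuousOn.sub
            · exact (by fun_prop : ContinuousOn (fun y : ℝ => 3*(t-y)^2) _).div (by fun_prop)
                (fun y hy => pow_ne_zero 2 (sub_ne_zero.2 (fun h => by
                  have h2 := hy.2; have h3 := h ▸ hxt; linarith)))
            · exact (by fun_prop : ContinuousOn (fun y : ℝ => 2*(t-y)^3) _).div (by fun_prop)
                (fun y hy => pow_ne_zero 3 (sub_ne_zero.2 (fun h => by
                  have h2 := hy.2; have h3 := h ▸ hxt; linarith))))
          (fun y hy => by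
            have hyx : y < x := lt_of_le_of_lt hy.2 hxt
            have hne : x - y ≠ 0 := by linarith
            show (0:ℝ) ≤ 3*(t-y)^2/(x-y)^2 - 2*(t-y)^3/(x-y)^3
            have hval : 3*(t-y)^2/(x-y)^2 - 2*(t-y)^3/(x-y)^3
                = (t-y)^2*(3*(x-y)-2*(t-y))/(x-y)^3 := by
              field_simp
            rw [hval]
            apply div_nonneg
            · have h3 := hy.2
              nlinarith
            · exact pow_nonneg (by linarith) 3)
        rw [this]
        congr 1
        have h2 : x ≠ 0 := by linarith
        field_simp
        ring
      · have hyx : y < x := lt_of_le_of_lt hy.2 hxt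
        rw [set_lt hyx, beta22_Iic]
        have hden : (0:ℝ) < x - y := by linarith
        by_cases hcz : (t - y) / (x - y) ≤ 0
        · rw [if_pos hcz]
          have hty : t - y ≤ 0 := by
            by_contra h
            push_neg at h
            have : 0 < (t - y) / (x - y) := by positivity
            linarith
          have hty' : t = y := le_antisymm (by linarith) hy.2
          subst hty'
          norm_num
        · rw [if_neg hcz, if_pos (by rw [div_le_one hden]; linarith)]
          congr 1
          field_simp
    rw [part1, part2, add_zero]

lemma outer {t : ℝ} (ht : t ∈ Ioo (0:ℝ) 1) :
    ∫⁻ x in Ioo 0 1, ENNReal.ofReal (if x ≤ t then 1 - (1-t)^3/(1-x)^2 else t^3/x^2)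
      = ENNReal.ofReal (3*t^2 - 2*t^3) := by
  obtain ⟨ht0, ht1⟩ := ht
  rw [Ioo_split ⟨ht0, ht1⟩, lintegral_union measurableSet_Ioo Ioc_Ioo_disj]
  have part1 : ∫⁻ x in Ioc 0 t, ENNReal.ofReal (if x ≤ t then 1 - (1-t)^3/(1-x)^2 else t^3/x^2)
      = ENNReal.ofReal ((t - (1-t)^3 * ((1:ℝ)-t)⁻¹) - (0 - (1-t)^3 * ((1:ℝ)-0)⁻¹)) := by
    rw [setLIntegral_congr_fun_ae measurableSet_Ioc (ae_of_all _
      (fun x (hx : x ∈ Ioc 0 t) => by rw [if_pos hx.2]))]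
    exact lint_deriv ht0.le
      (f := fun x => 1 - (1-t)^3/(1-x)^2)
      (F := fun x => x - (1-t)^3 * ((1:ℝ)-x)⁻¹)
      (fun x hx => by
        rw [uIcc_of_le ht0.le] at hx
        have hne : (1:ℝ) - x ≠ 0 := by have := hx.2; intro h; linarith
        have h1 : HasDerivAt (fun x : ℝ => 1 - x) (-1) x := by
          simpa using ((hasDerivAt_id x).const_sub 1)
        have h2 := ((h1.inv hne).const_mul ((1-t)^3)).neg
        have h3 := (hasDerivAt_id x).add h2
        refine h3.congr_deriv ?_
        beta_reduce
        field_simp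
        ring)
      (by
        rw [uIcc_of_le ht0.le]
        apply ContinuousOn.sub continuousOn_const
        exact continuousOn_const.div (by fun_prop) (fun x hx =>
          pow_ne_zero 2 (fun h => by have := hx.2; linarith)))
      (fun x hx => by
        have hx2 := hx.2
        have h1x : (0:ℝ) < 1 - x := by linarith
        rw [sub_nonneg, div_le_one (by positivity)]
        have e2 : (1-t)^3 ≤ (1-x)^3 := pow_le_pow_left₀ (by linarith) (by linarith) 3
        have e3 : (1-x)^3 ≤ (1-x)^2 :=
          pow_le_pow_of_le_one (by linarith) (by have := hx.1; linarith) (by norm_num)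
        linarith)
  have part2 : ∫⁻ x in Ioo t 1, ENNReal.ofReal (if x ≤ t then 1 - (1-t)^3/(1-x)^2 else t^3/x^2)
      = ENNReal.ofReal ((-(t^3) * ((1:ℝ))⁻¹) - (-(t^3) * (t)⁻¹)) := by
    rw [Measure.restrict_congr_set Ioo_ae_eq_Ioc]
    rw [setLIntegral_congr_fun_ae measurableSet_Ioc (ae_of_all _
      (fun x (hx : x ∈ Ioc t 1) => by rw [if_neg (not_le.2 hx.1)]))]
    exact lint_deriv ht1.le
      (f := fun x => t^3/x^2)
      (F := fun x => -(t^3) * (x:ℝ)⁻¹)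
      (fun x hx => by
        rw [uIcc_of_le ht1.le] at hx
        have hne : x ≠ 0 := by have := hx.1; intro h; subst h; linarith
        have h1 := ((hasDerivAt_id x).inv hne).const_mul (-(t^3))
        refine h1.congr_deriv ?_
        simp only [id_eq]
        field_simp)
      (by
        rw [uIcc_of_le ht1.le]
        exact continuousOn_const.div (by fun_prop) (fun x hx => pow_ne_zero 2
          (fun h => by have := hx.1; linarith)))
      (fun x hx => by
        have := hx.1
        positivity)
  rw [part1, part2, ← ENNReal.ofReal_add]
  · congr 1
    have h1 : (1:ℝ) - t ≠ 0 := by intro h; linarith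
    have h2 : t ≠ 0 := by intro h; linarith
    field_simp
    ring
  · have h1 : (1:ℝ) - t ≠ 0 := by intro h; linarith
    have key : (t - (1-t)^3 * ((1:ℝ)-t)⁻¹) - (0 - (1-t)^3 * ((1:ℝ)-0)⁻¹)
        = t - (1-t)^2 + (1-t)^3 := by
      field_simp
      ring
    rw [key]
    nlinarith [mul_nonneg (mul_nonneg ht0.le ht0.le) (by linarith : (0:ℝ) ≤ 2 - t)]
  · have h2 : t ≠ 0 := by intro h; linarith
    have key : (-(t^3) * ((1:ℝ))⁻¹) - (-(t^3) * (t)⁻¹) = t^2 - t^3 := by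
      field_simp
      ring
    rw [key]
    nlinarith

theorem rwa_uniform_beta22 {Ω : Type*} [MeasurableSpace Ω] (μ : Measure Ω)
    [IsProbabilityMeasure μ]
    (W X₁ X₂ : Ω → ℝ) (hWm : Measurable W) (hX₁m : Measurable X₁)
    (hX₂m : Measurable X₂)
    (hindep : iIndepFun ![W, X₁, X₂] μ)
    (hW : Measure.map W μ = betaMeasure' 2 2)
    (hX₁ : Measure.map X₁ μ = volume.restrict (Set.Ioo (0:ℝ) 1))
    (hX₂ : Measure.map X₂ μ = volume.restrict (Set.Ioo (0:ℝ) 1)) :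
    Measure.map (fun ω => W ω * X₁ ω + (1 - W ω) * X₂ ω) μ = betaMeasure' 2 2 ∧
      betaMeasure' 2 2 = volume.withDensity fun x => ENNReal.ofReal
        (Set.indicator (Set.Ioo 0 1) (fun x => 6 * x * (1 - x)) x) := by
  refine ⟨?_, beta22_eq⟩
  set unif : Measure ℝ := volume.restrict (Set.Ioo (0:ℝ) 1) with hunif
  have hunifP : IsProbabilityMeasure unif := ⟨by simp [hunif, Real.volume_Ioo]⟩
  have hmeas : ∀ i, Measurable (![W, X₁, X₂] i) := by
    intro i
    fin_cases i <;> simpa using (by assumption : Measurable _)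
  -- independence of (X₁, X₂) and W
  have h12 : IndepFun X₁ X₂ μ := by
    have := hindep.indepFun (i := 1) (j := 2) (by decide)
    simpa using this
  have hpairW : IndepFun (fun ω => (X₁ ω, X₂ ω)) W μ := by
    have := hindep.indepFun_prodMk hmeas 1 2 0 (by decide) (by decide)
    simpa using this
  have hmap12 : Measure.map (fun ω => (X₁ ω, X₂ ω)) μ = unif.prod unif := by
    rw [(indepFun_iff_map_prod_eq_prod_map_map hX₁m.aemeasurable hX₂m.aemeasurable).mp h12,
      hX₁, hX₂]
  have hpairm : Measurable (fun ω => ((X₁ ω, X₂ ω), W ω)) :=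
    (hX₁m.prodMk hX₂m).prodMk hWm
  have hjoint : Measure.map (fun ω => ((X₁ ω, X₂ ω), W ω)) μ
      = (unif.prod unif).prod (betaMeasure' 2 2) := by
    rw [(indepFun_iff_map_prod_eq_prod_map_map
      (hX₁m.prodMk hX₂m).aemeasurable hWm.aemeasurable).mp hpairW, hmap12, hW]
  set g : (ℝ × ℝ) × ℝ → ℝ := fun p => p.2 * p.1.1 + (1 - p.2) * p.1.2 with hg
  have hgm : Measurable g := by fun_prop
  have hcomp : Measure.map (fun ω => W ω * X₁ ω + (1 - W ω) * X₂ ω) μ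
      = Measure.map g ((unif.prod unif).prod (betaMeasure' 2 2)) := by
    rw [← hjoint, Measure.map_map hgm hpairm]
    rfl
  rw [hcomp]
  have : IsProbabilityMeasure (Measure.map g ((unif.prod unif).prod (betaMeasure' 2 2))) :=
    Measure.isProbabilityMeasure_map hgm.aemeasurable
  apply MeasureTheory.Measure.ext_of_Iic
  intro t
  rw [Measure.map_apply hgm measurableSet_Iic, beta22_Iic t]
  have hS : MeasurableSet (g ⁻¹' Iic t) := hgm measurableSet_Iic
  rw [Measure.prod_apply hS]
  have hsec : ∀ p : ℝ × ℝ, (Prod.mk p ⁻¹' (g ⁻¹' Iic t))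
      = {w : ℝ | w * p.1 + (1 - w) * p.2 ≤ t} := by
    intro p
    rfl
  simp_rw [hsec]
  have hmeasf : Measurable (fun p : ℝ × ℝ => betaMeasure' 2 2 {w | w * p.1 + (1 - w) * p.2 ≤ t}) := by
    have := measurable_measure_prodMk_left (ν := betaMeasure' 2 2)
      (s := g ⁻¹' Iic t) hS
    simp_rw [hsec] at this
    exact this
  rw [MeasureTheory.lintegral_prod _ hmeasf.aemeasurable]
  rcases le_or_gt t 0 with ht0 | ht0
  · -- t ≤ 0 : everything zero
    rw [if_pos ht0, ENNReal.ofReal_zero, hunif]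
    have : ∀ x ∈ Ioo (0:ℝ) 1, ∫⁻ y in Ioo (0:ℝ) 1,
        betaMeasure' 2 2 {w | w * x + (1 - w) * y ≤ t} = 0 := by
      intro x hx
      rw [setLIntegral_congr_fun_ae measurableSet_Ioo (ae_of_all _
        (fun y (hy : y ∈ Ioo (0:ℝ) 1) => beta22_zero (set_meas x y t) ?_)), lintegral_zero]
      ext w
      simp only [mem_inter_iff, mem_setOf_eq, mem_Ioo, mem_empty_iff_false, iff_false, not_and]
      intro h1 h2 h3
      have h4 := hx.1; have h5 := hy.1
      nlinarith
    rw [setLIntegral_congr_fun_ae measurableSet_Ioo (ae_of_all _ this), lintegral_zero]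
  rcases lt_or_ge t 1 with ht1 | ht1
  · -- 0 < t < 1
    rw [if_neg (not_le.2 ht0), if_pos ht1.le, hunif]
    have : ∀ x ∈ Ioo (0:ℝ) 1, ∫⁻ y in Ioo (0:ℝ) 1,
        betaMeasure' 2 2 {w | w * x + (1 - w) * y ≤ t}
          = ENNReal.ofReal (if x ≤ t then 1 - (1-t)^3/(1-x)^2 else t^3/x^2) :=
      fun x hx => middle hx ⟨ht0, ht1⟩
    rw [setLIntegral_congr_fun_ae measurableSet_Ioo (ae_of_all _ this)]
    exact outer ⟨ht0, ht1⟩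
  · -- t ≥ 1
    have hval : (if t ≤ 1 then 3*t^2 - 2*t^3 else 1) = 1 := by
      split
      · next h =>
        have : t = 1 := le_antisymm h ht1
        subst this
        norm_num
      · rfl
    rw [if_neg (not_le.2 ht0), hval, ENNReal.ofReal_one, hunif]
    have : ∀ x ∈ Ioo (0:ℝ) 1, ∫⁻ y in Ioo (0:ℝ) 1,
        betaMeasure' 2 2 {w | w * x + (1 - w) * y ≤ t} = 1 := by
      intro x hx
      rw [setLIntegral_congr_fun_ae measurableSet_Ioo (ae_of_all _
        (fun y (hy : y ∈ Ioo (0:ℝ) 1) => beta22_one (set_meas x y t)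
          (fun w hw => ?_))), setLIntegral_one, Real.volume_Ioo]
      · norm_num
      · simp only [mem_setOf_eq]
        have h1 := hw.1; have h2 := hw.2
        have h4 := hx.1; have h5 := hx.2; have h6 := hy.1; have h7 := hy.2
        nlinarith
    rw [setLIntegral_congr_fun_ae measurableSet_Ioo (ae_of_all _ this), setLIntegral_one,
      Real.volume_Ioo]
    norm_num
end
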